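/- arXiv:1611.07506 — 2 statements merged into one kernel-verified Lean document; each statement's English description precedes it below -/
import Mathlib

section
/- Let k be a field and f_1,...,f_m ∈ k[x_1,...,x_n] with m ≥ 2 and gcd(f_1,...,f_m) = 1. Then there exists an infinite sequence of polynomials h_1, h_2, h_3, ... in the ideal (f_1,...,f_m) such that gcd(h_i, h_j) = 1 for all i ≠ j. -/
open UniqueFactorizationMonoid in
/-- Prime avoidance step: in a UFD, given an ideal `I` not contained in any
prime principal ideal, a nonzero nonunit-ish element `f0 ∈ I`, and any `g`,
there is a nonzero `h ∈ I` avoiding all prime divisors of `g * f0`. -/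
lemma avoid_aux {R : Type} [CommRing R] [IsDomain R] [UniqueFactorizationMonoid R]
    (I : Ideal R) (hI : I ≠ ⊤)
    (hav : ∀ p : R, Prime p → ∃ x, x ∈ I ∧ ¬ p ∣ x)
    (f0 : R) (hf0I : f0 ∈ I) (hf00 : f0 ≠ 0) (g : R) :
    ∃ h, h ∈ I ∧ h ≠ 0 ∧ (g ≠ 0 → ∀ p : R, Prime p → p ∣ g * f0 → ¬ p ∣ h) := by
  classical
  by_cases hg : g = 0
  · exact ⟨f0, hf0I, hf00, fun hg' => absurd hg hg'⟩
  have hg' : g * f0 ≠ 0 := mul_ne_zero hg hf00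
  have hf0u : ¬ IsUnit f0 := fun hu => hI (Ideal.eq_top_of_isUnit_mem I hf0I hu)
  have hg'u : ¬ IsUnit (g * f0) := fun hu => hf0u (isUnit_of_mul_isUnit_right hu)
  set S : Finset R := (factors (g * f0)).toFinset with hS
  have hprime : ∀ q ∈ S, Prime q := fun q hq =>
    prime_of_factor q (Multiset.mem_toFinset.mp hq)
  have hnle : ∀ q ∈ S, ¬ I ≤ Ideal.span {q} := by
    intro q hq hle
    obtain ⟨x, hxI, hxq⟩ := hav q (hprime q hq)
    exact hxq (Ideal.mem_span_singleton.mp (hle hxI))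
  have hsub : ¬ ((I : Set R) ⊆ ⋃ q ∈ (↑S : Set R), (Ideal.span {q} : Ideal R)) := by
    rw [Ideal.subset_union_prime (0 : R) (0 : R)
      (fun i hi _ _ => (Ideal.span_singleton_prime (hprime i hi).ne_zero).mpr (hprime i hi))]
    rintro ⟨q, hq, hle⟩
    exact hnle q hq hle
  obtain ⟨h, hhI, hhU⟩ := Set.not_subset.mp hsub
  have hnd : ∀ q ∈ S, ¬ q ∣ h := by
    intro q hq hdvd
    exact hhU (Set.mem_biUnion hq (Ideal.mem_span_singleton.mpr hdvd))
  have key : ∀ p : R, Prime p → p ∣ g * f0 → ¬ p ∣ h := by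
    intro p hp hpg hph
    obtain ⟨q, hq, hassoc⟩ := exists_mem_factors_of_dvd hg' hp.irreducible hpg
    exact hnd q (Multiset.mem_toFinset.mpr hq) (hassoc.dvd_iff_dvd_left.mp hph)
  have hh0 : h ≠ 0 := by
    obtain ⟨q, hqirr, hqdvd⟩ := WfDvdMonoid.exists_irreducible_factor hg'u hg'
    have hqp : Prime q := UniqueFactorizationMonoid.irreducible_iff_prime.mp hqirr
    intro h0
    exact key q hqp hqdvd (h0 ▸ dvd_zero q)
  exact ⟨h, hhI, hh0, fun _ => key⟩

/-- Building an infinite pairwise relatively prime sequence in `I`. -/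
lemma seq_aux {R : Type} [CommRing R] [IsDomain R] [UniqueFactorizationMonoid R]
    (I : Ideal R) (hI : I ≠ ⊤)
    (hav : ∀ p : R, Prime p → ∃ x, x ∈ I ∧ ¬ p ∣ x)
    (f0 : R) (hf0I : f0 ∈ I) (hf00 : f0 ≠ 0) :
    ∃ h : ℕ → R, (∀ t, h t ∈ I) ∧ ∀ i j, i ≠ j → IsRelPrime (h i) (h j) := by
  classical
  let F : R → R := fun g => (avoid_aux I hI hav f0 hf0I hf00 g).choose
  have hF : ∀ g : R, F g ∈ I ∧ F g ≠ 0 ∧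
      (g ≠ 0 → ∀ p : R, Prime p → p ∣ g * f0 → ¬ p ∣ F g) :=
    fun g => (avoid_aux I hI hav f0 hf0I hf00 g).choose_spec
  -- S t = (h t, product h 0 * ... * h t)
  let S : ℕ → R × R := fun t =>
    Nat.rec (F 1, F 1) (fun _ p => (F p.2, p.2 * F p.2)) t
  refine ⟨fun t => (S t).1, fun t => ?_, ?_⟩
  · cases t with
    | zero => exact (hF 1).1
    | succ t => exact (hF (S t).2).1
  · -- basic facts by induction
    have hfact : ∀ t : ℕ, (S t).2 ≠ 0 ∧ ∀ s, s ≤ t → (S s).1 ∣ (S t).2 := by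
      intro t
      induction t with
      | zero =>
        refine ⟨(hF 1).2.1, fun s hs => ?_⟩
        interval_cases s
        exact dvd_refl _
      | succ t ih =>
        constructor
        · exact mul_ne_zero ih.1 (hF (S t).2).2.1
        · intro s hs
          rcases Nat.lt_or_ge s (t + 1) with h' | h'
          · exact dvd_mul_of_dvd_left (ih.2 s (Nat.lt_succ_iff.mp h')) _
          · have : s = t + 1 := le_antisymm hs h'
            subst this
            exact dvd_mul_left _ _
    have h0 : ∀ t, (S t).1 ≠ 0 := by
      intro t
      cases t with
      | zero => exact (hF 1).2.1
      | succ t => exact (hF (S t).2).2.1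
    -- key asymmetric coprimality
    have key : ∀ i j : ℕ, i < j → IsRelPrime ((S i).1) ((S j).1) := by
      intro i j hij d hdi hdj
      by_contra hdu
      have hd0 : d ≠ 0 := fun h => h0 i (zero_dvd_iff.mp (h ▸ hdi))
      obtain ⟨p, hpirr, hpd⟩ := WfDvdMonoid.exists_irreducible_factor hdu hd0
      have hpp : Prime p := UniqueFactorizationMonoid.irreducible_iff_prime.mp hpirr
      obtain ⟨j', rfl⟩ : ∃ j', j = j' + 1 := ⟨j - 1, (Nat.succ_pred_eq_of_pos (Nat.pos_of_ne_zero (by omega))).symm⟩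
      have hiP : (S i).1 ∣ (S j').2 := (hfact j').2 i (by omega)
      have hp1 : p ∣ (S j').2 * f0 :=
        dvd_mul_of_dvd_left (dvd_trans (dvd_trans hpd hdi) hiP) f0
      have hnp : ¬ p ∣ F (S j').2 := (hF (S j').2).2.2 (hfact j').1 p hpp hp1
      exact hnp (dvd_trans hpd hdj)
    intro i j hij
    rcases Nat.lt_or_ge i j with h' | h'
    · exact key i j h'
    · exact (key j i (lt_of_le_of_ne h' (Ne.symm hij))).symm

/-- If `f₁, …, f_m ∈ k[x₁,…,x_n]` (m ≥ 2) have `gcd(f₁,…,f_m) = 1`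
(i.e. every common divisor is a unit), then there is an infinite sequence of
polynomials `h₀, h₁, h₂, …` in the ideal `(f₁,…,f_m)` that are pairwise coprime. -/
theorem exists_infinite_pairwise_coprime_in_ideal
    (k : Type) [Field k] (n m : ℕ) (hm : 2 ≤ m)
    (f : Fin m → MvPolynomial (Fin n) k)
    (hgcd : ∀ p : MvPolynomial (Fin n) k, (∀ i, p ∣ f i) → IsUnit p) :
    ∃ h : ℕ → MvPolynomial (Fin n) k,
      (∀ i, h i ∈ Ideal.span (Set.range f)) ∧
      (∀ i j, i ≠ j → IsRelPrime (h i) (h j)) := by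
  classical
  set I : Ideal (MvPolynomial (Fin n) k) := Ideal.span (Set.range f) with hIdef
  by_cases hI : I = ⊤
  · exact ⟨fun _ => 1, fun _ => hI ▸ Submodule.mem_top, fun _ _ _ => isRelPrime_one_left⟩
  · -- pick a nonzero generator
    have hfj : ∃ j, f j ≠ 0 := by
      by_contra hc
      push_neg at hc
      have : IsUnit (0 : MvPolynomial (Fin n) k) := hgcd 0 (fun i => by rw [hc i])
      exact not_isUnit_zero this
    obtain ⟨j, hj⟩ := hfj
    have hfjI : f j ∈ I := Ideal.subset_span ⟨j, rfl⟩
    have hav : ∀ p : MvPolynomial (Fin n) k, Prime p → ∃ x, x ∈ I ∧ ¬ p ∣ x := by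
      intro p hp
      by_contra hc
      push_neg at hc
      exact hp.not_unit (hgcd p (fun i => hc (f i) (Ideal.subset_span ⟨i, rfl⟩)))
    exact seq_aux I hI hav (f j) hfjI hj
end

section
/- Let J = (f_1,...,f_m) ⊂ T = k[s,t,u] be a homogeneous ideal. Then for every integer p, the graded Betti number β_{2,p}(J) = dim_k Tor_2^T(J, k)_p satisfies β_{2,p}(J) ≤ H_J(p−2) − H_J(p−3), where H_J is the Hilbert function of J. -/
open MvPolynomial

abbrev S3 (k : Type) [Field k] := MvPolynomial (Fin 3) k

/-- The Hilbert function of an ideal `J ⊆ k[s,t,u]`: `H_J(p) = dim_k J_p`. -/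
noncomputable def hilbertFunction (k : Type) [Field k]
    (J : Ideal (S3 k)) (p : ℕ) : ℕ :=
  Module.finrank k ↥(J.restrictScalars k ⊓ homogeneousSubmodule (Fin 3) k p)

/-- A minimal *graded* free resolution
`0 → ⊕ᵢ S(−deg2 i) → ⊕ᵢ S(−deg1 i) → ⊕ᵢ S(−deg0 i) → J → 0` of a homogeneous
ideal `J ⊆ S = k[s,t,u]`; the number of `i` with `deg2 i = p` is the graded
Betti number `β_{2,p}(J) = dim_k Tor₂^S(J,k)_p`. -/
structure GradedMinFreeRes (k : Type) [Field k] (J : Ideal (S3 k)) where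
  b0 : ℕ
  b1 : ℕ
  b2 : ℕ
  deg0 : Fin b0 → ℕ
  deg1 : Fin b1 → ℕ
  deg2 : Fin b2 → ℕ
  ε : (Fin b0 → S3 k) →ₗ[S3 k] S3 k
  d1 : (Fin b1 → S3 k) →ₗ[S3 k] (Fin b0 → S3 k)
  d2 : (Fin b2 → S3 k) →ₗ[S3 k] (Fin b1 → S3 k)
  range_eps : LinearMap.range ε = J
  exact1 : LinearMap.ker ε = LinearMap.range d1
  exact2 : LinearMap.ker d1 = LinearMap.range d2
  inj2 : LinearMap.ker d2 = ⊥
  min1 : ∀ x i, constantCoeff (d1 x i) = 0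
  min2 : ∀ x i, constantCoeff (d2 x i) = 0
  hom0 : ∀ i, (ε (Pi.single i 1)).IsHomogeneous (deg0 i)
  hom1 : ∀ i j, d1 (Pi.single j 1) i = 0 ∨
    (deg0 i ≤ deg1 j ∧ (d1 (Pi.single j 1) i).IsHomogeneous (deg1 j - deg0 i))
  hom2 : ∀ i j, d2 (Pi.single j 1) i = 0 ∨
    (deg1 i ≤ deg2 j ∧ (d2 (Pi.single j 1) i).IsHomogeneous (deg2 j - deg1 i))

namespace BettiAux

variable {k : Type} [Field k]

/-- kill variable `i` -/
noncomputable def kill (i : Fin 3) : MvPolynomial (Fin 3) k →ₐ[k] MvPolynomial (Fin 3) k :=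
  aeval (fun r => if r = i then 0 else X r)

@[simp] lemma kill_X_self (i : Fin 3) : kill i (X i : MvPolynomial (Fin 3) k) = 0 := by
  simp [kill]

lemma kill_X_ne (i j : Fin 3) (h : j ≠ i) : kill i (X j : MvPolynomial (Fin 3) k) = X j := by
  simp [kill, h]

lemma exists_kill (i : Fin 3) (q : MvPolynomial (Fin 3) k) :
    ∃ D, q = X i * D + kill i q := by
  induction q using MvPolynomial.induction_on with
  | C a => exact ⟨0, by simp [kill]⟩
  | add p q hp hq =>
      obtain ⟨D, hD⟩ := hp; obtain ⟨E, hE⟩ := hq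
      refine ⟨D + E, ?_⟩
      rw [map_add]
      linear_combination hD + hE
  | mul_X p n hp =>
      obtain ⟨D, hD⟩ := hp
      rcases eq_or_ne n i with rfl | hn
      · exact ⟨p, by rw [map_mul, kill_X_self, mul_zero, add_zero]; ring⟩
      · refine ⟨D * X n, ?_⟩
        rw [map_mul, kill_X_ne i n hn]
        linear_combination X n * hD

lemma dvd_of_kill (i : Fin 3) (q : MvPolynomial (Fin 3) k) (h : kill i q = 0) :
    ∃ D, q = X i * D := by
  obtain ⟨D, hD⟩ := exists_kill i q
  exact ⟨D, by rw [hD, h, add_zero]⟩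

/-- kill variables 1 and 2 -/
noncomputable def kill12 : MvPolynomial (Fin 3) k →ₐ[k] MvPolynomial (Fin 3) k :=
  aeval (fun r => if r = 0 then X 0 else 0)

@[simp] lemma kill12_X0 : kill12 (X 0 : MvPolynomial (Fin 3) k) = X 0 := by simp [kill12]
@[simp] lemma kill12_X1 : kill12 (X 1 : MvPolynomial (Fin 3) k) = 0 := by simp [kill12]
@[simp] lemma kill12_X2 : kill12 (X 2 : MvPolynomial (Fin 3) k) = 0 := by simp [kill12]

lemma exists_kill12 (q : MvPolynomial (Fin 3) k) :
    ∃ D E, q = X 1 * D + X 2 * E + kill12 q := by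
  induction q using MvPolynomial.induction_on with
  | C a => exact ⟨0, 0, by simp [kill12]⟩
  | add p q hp hq =>
      obtain ⟨D, E, hDE⟩ := hp; obtain ⟨D', E', hDE'⟩ := hq
      refine ⟨D + D', E + E', ?_⟩
      rw [map_add]
      linear_combination hDE + hDE'
  | mul_X p n hp =>
      obtain ⟨D, E, hDE⟩ := hp
      rcases show n = 0 ∨ n = 1 ∨ n = 2 by revert n; decide with rfl | rfl | rfl
      · refine ⟨D * X 0, E * X 0, ?_⟩
        rw [map_mul, kill12_X0]
        linear_combination X 0 * hDE
      · exact ⟨p, 0, by rw [map_mul, kill12_X1, mul_zero]; ring⟩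
      · exact ⟨0, p, by rw [map_mul, kill12_X2, mul_zero]; ring⟩

lemma kill_kill12 (q : MvPolynomial (Fin 3) k) :
    kill 0 (kill12 q) = C (constantCoeff q) := by
  induction q using MvPolynomial.induction_on with
  | C a => simp [kill, kill12]
  | add p q hp hq => rw [map_add, map_add, hp, hq, map_add, map_add]
  | mul_X p n hp =>
      rcases show n = 0 ∨ n = 1 ∨ n = 2 by revert n; decide with rfl | rfl | rfl
      · rw [map_mul, kill12_X0, map_mul, kill_X_self, mul_zero, map_mul, constantCoeff_X,
          mul_zero, map_zero]
      · rw [map_mul, kill12_X1, mul_zero, map_zero, map_mul, constantCoeff_X, mul_zero, map_zero]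
      · rw [map_mul, kill12_X2, mul_zero, map_zero, map_mul, constantCoeff_X, mul_zero, map_zero]

/-- Splitting of a polynomial with zero constant term. -/
lemma split3 (q : MvPolynomial (Fin 3) k) (h : constantCoeff q = 0) :
    ∃ A B Cc, q = X 0 * A + X 1 * B + X 2 * Cc := by
  obtain ⟨D, E, hDE⟩ := exists_kill12 q
  have h0 : kill 0 (kill12 q) = 0 := by rw [kill_kill12, h, map_zero]
  obtain ⟨A, hA⟩ := dvd_of_kill 0 (kill12 q) h0
  exact ⟨A, D, E, by linear_combination hDE + hA⟩


variable {k : Type} [Field k]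

lemma degree_add' (a b : Fin 3 →₀ ℕ) : (a + b).degree = a.degree + b.degree := by
  simp [Finsupp.degree_eq_weight_one, map_add]

lemma degree_single1 (i : Fin 3) : (Finsupp.single i 1).degree = 1 := by
  simp [Finsupp.degree_eq_weight_one, Finsupp.weight_apply, Finsupp.sum_single_index]

lemma X_mul_monomial' (i : Fin 3) (d : Fin 3 →₀ ℕ) (a : k) :
    (X i : MvPolynomial (Fin 3) k) * monomial d a = monomial (Finsupp.single i 1 + d) a := by
  rw [X, monomial_mul, one_mul]

lemma hc_monomial (m : ℕ) (d : Fin 3 →₀ ℕ) (a : k) :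
    homogeneousComponent m (monomial d a : MvPolynomial (Fin 3) k) =
      if m = d.degree then monomial d a else 0 :=
  homogeneousComponent_of_mem
    ((mem_homogeneousSubmodule _ _).2 (isHomogeneous_monomial a rfl))

lemma hcX (n : ℕ) (i : Fin 3) (q : MvPolynomial (Fin 3) k) :
    homogeneousComponent (n + 1) (X i * q) = X i * homogeneousComponent n q := by
  induction q using MvPolynomial.induction_on' with
  | monomial d a =>
      rw [X_mul_monomial', hc_monomial, hc_monomial, degree_add', degree_single1]
      split_ifs with h1 h2 h2
      · rw [X_mul_monomial']
      · omega
      · omega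
      · rw [mul_zero]
  | add p q hp hq =>
      rw [mul_add, map_add, map_add, hp, hq, mul_add]

lemma hc_of_homog {n : ℕ} {q : MvPolynomial (Fin 3) k} (h : q.IsHomogeneous n) :
    homogeneousComponent n q = q := by
  rw [homogeneousComponent_of_mem ((mem_homogeneousSubmodule _ _).2 h), if_pos rfl]

lemma homog_of_X_mul {n : ℕ} {i : Fin 3} {q : MvPolynomial (Fin 3) k}
    (h : (X i * q).IsHomogeneous (n + 1)) : q.IsHomogeneous n := by
  have h1 := hc_of_homog h
  rw [hcX] at h1
  have h2 : q = homogeneousComponent n q :=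
    (mul_left_cancel₀ (X_ne_zero i) h1).symm
  rw [h2]
  exact homogeneousComponent_isHomogeneous n q

lemma homog_zero_eq_C {q : MvPolynomial (Fin 3) k} (h : q.IsHomogeneous 0) :
    q = C (coeff 0 q) := by
  conv_lhs => rw [← hc_of_homog h]
  rw [homogeneousComponent_zero]

lemma cc_X_mul (i : Fin 3) (q : MvPolynomial (Fin 3) k) :
    constantCoeff (X i * q) = 0 := by
  rw [map_mul, constantCoeff_X, zero_mul]

/-- three homogeneous degree-0 polynomials in a Koszul relation vanish -/
lemma triple_zero {A B Cc : MvPolynomial (Fin 3) k}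
    (hA : A.IsHomogeneous 0) (hB : B.IsHomogeneous 0) (hC : Cc.IsHomogeneous 0)
    (e : X 0 * A + X 1 * B + X 2 * Cc = 0) : A = 0 ∧ B = 0 ∧ Cc = 0 := by
  rw [homog_zero_eq_C hA, homog_zero_eq_C hB, homog_zero_eq_C hC] at e ⊢
  have key : ∀ j : Fin 3, coeff (Finsupp.single j 1) (X 0 * C (coeff 0 A) + X 1 * C (coeff 0 B)
      + X 2 * C (coeff 0 Cc) : MvPolynomial (Fin 3) k) = 0 := by
    intro j; rw [e, coeff_zero]
  have c0 := key 0; have c1 := key 1; have c2 := key 2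
  have hXC : ∀ (i : Fin 3) (a : k), (X i : MvPolynomial (Fin 3) k) * C a
      = monomial (Finsupp.single i 1) a := by
    intro i a; rw [X, C_apply, monomial_mul, add_zero, one_mul]
  rw [hXC, hXC, hXC, coeff_add, coeff_add, coeff_monomial, coeff_monomial, coeff_monomial]
    at c0 c1 c2
  simp only [Finsupp.single_eq_single_iff] at c0 c1 c2
  norm_num [Fin.ext_iff] at c0 c1 c2
  rw [c0, c1, c2, map_zero]
  exact ⟨rfl, rfl, rfl⟩


variable {k : Type} [Field k]

lemma X_mul_cancel {i : Fin 3} {a b : MvPolynomial (Fin 3) k}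
    (h : X i * a = X i * b) : a = b :=
  mul_left_cancel₀ (X_ne_zero i) h

lemma X_mul_eq_zero {i : Fin 3} {a : MvPolynomial (Fin 3) k}
    (h : X i * a = 0) : a = 0 := by
  rcases mul_eq_zero.1 h with h1 | h1
  · exact absurd h1 (X_ne_zero i)
  · exact h1

/-- graded Koszul exactness at spot 2 -/
lemma E2 {n : ℕ} {A B Cc : MvPolynomial (Fin 3) k}
    (hA : A.IsHomogeneous n) (_hB : B.IsHomogeneous n) (_hC : Cc.IsHomogeneous n)
    (e1 : X 1 * A + X 2 * B = 0) (e2 : -(X 0 * A) + X 2 * Cc = 0) :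
    ∃ f : MvPolynomial (Fin 3) k, A = X 2 * f ∧ B = -(X 1 * f) ∧ Cc = X 0 * f ∧
      (f = 0 ∨ (1 ≤ n ∧ f.IsHomogeneous (n - 1))) := by
  by_cases hA0 : A = 0
  · have hB0 : B = 0 := X_mul_eq_zero (i := 2) (by linear_combination e1 - X 1 * hA0)
    have hC0 : Cc = 0 := X_mul_eq_zero (i := 2) (by linear_combination e2 + X 0 * hA0)
    exact ⟨0, by simp [hA0, hB0, hC0]⟩
  · have h1 : kill 2 (X 1 * A + X 2 * B) = 0 := by rw [e1, map_zero]
    rw [map_add, map_mul, map_mul, kill_X_self, kill_X_ne 2 1 (by decide), zero_mul,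
      add_zero] at h1
    obtain ⟨f, hf⟩ := dvd_of_kill 2 A (X_mul_eq_zero h1)
    have hn : 1 ≤ n := by
      rcases Nat.eq_zero_or_pos n with rfl | h
      · exfalso
        apply hA0
        rw [homog_zero_eq_C hA, ← constantCoeff_eq, hf, cc_X_mul, map_zero]
      · exact h
    obtain ⟨n', rfl⟩ : ∃ n', n = n' + 1 := ⟨n - 1, by omega⟩
    have hfh : f.IsHomogeneous n' := homog_of_X_mul (hf ▸ hA)
    refine ⟨f, hf, ?_, ?_, Or.inr ⟨hn, by simpa using hfh⟩⟩
    · exact X_mul_cancel (i := 2) (by linear_combination e1 - X 1 * hf)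
    · exact X_mul_cancel (i := 2) (by linear_combination e2 + X 0 * hf)

/-- graded Koszul exactness at spot 1 -/
lemma E1 {n : ℕ} {A B Cc : MvPolynomial (Fin 3) k}
    (hA : A.IsHomogeneous n) (hB : B.IsHomogeneous n) (hC : Cc.IsHomogeneous n)
    (e : X 0 * A + X 1 * B + X 2 * Cc = 0) :
    ∃ v1 v2 v3 : MvPolynomial (Fin 3) k,
      A = X 1 * v1 + X 2 * v2 ∧ B = -(X 0 * v1) + X 2 * v3 ∧ Cc = -(X 0 * v2) - X 1 * v3 ∧
      (v1 = 0 ∨ (1 ≤ n ∧ v1.IsHomogeneous (n - 1))) ∧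
      (v2 = 0 ∨ (1 ≤ n ∧ v2.IsHomogeneous (n - 1))) ∧
      (v3 = 0 ∨ (1 ≤ n ∧ v3.IsHomogeneous (n - 1))) := by
  rcases Nat.eq_zero_or_pos n with rfl | hn
  · obtain ⟨h1, h2, h3⟩ := triple_zero hA hB hC e
    exact ⟨0, 0, 0, by simp [h1], by simp [h2], by simp [h3], Or.inl rfl, Or.inl rfl, Or.inl rfl⟩
  · -- ungraded witnesses first
    have hk : kill12 (X 0 * A + X 1 * B + X 2 * Cc) = 0 := by rw [e, map_zero]
    rw [map_add, map_add, map_mul, map_mul, map_mul, kill12_X0, kill12_X1, kill12_X2,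
      zero_mul, zero_mul, add_zero, add_zero] at hk
    obtain ⟨D, E, hDE⟩ := exists_kill12 A
    rw [X_mul_eq_zero hk, add_zero] at hDE
    -- t (B + s D) + u (C + s E) = 0
    have h2 : kill 2 (X 1 * (B + X 0 * D) + X 2 * (Cc + X 0 * E)) = 0 := by
      rw [show X 1 * (B + X 0 * D) + X 2 * (Cc + X 0 * E) = 0 by linear_combination e - X 0 * hDE,
        map_zero]
    rw [map_add, map_mul, map_mul, kill_X_self, kill_X_ne 2 1 (by decide), zero_mul,
      add_zero] at h2
    obtain ⟨F, hF⟩ := dvd_of_kill 2 (B + X 0 * D) (X_mul_eq_zero h2)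
    have hCF : Cc = -(X 0 * E) - X 1 * F := by
      refine X_mul_cancel (i := 2) ?_
      linear_combination e - X 0 * hDE - X 1 * hF
    obtain ⟨n', rfl⟩ : ∃ n', n = n' + 1 := ⟨n - 1, by omega⟩
    refine ⟨homogeneousComponent n' D, homogeneousComponent n' E, homogeneousComponent n' F,
      ?_, ?_, ?_,
      Or.inr ⟨hn, by simpa using homogeneousComponent_isHomogeneous n' D⟩,
      Or.inr ⟨hn, by simpa using homogeneousComponent_isHomogeneous n' E⟩,
      Or.inr ⟨hn, by simpa using homogeneousComponent_isHomogeneous n' F⟩⟩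
    · calc A = homogeneousComponent (n' + 1) A := (hc_of_homog hA).symm
        _ = homogeneousComponent (n' + 1) (X 1 * D + X 2 * E) := by rw [← hDE]
        _ = _ := by rw [map_add, hcX, hcX]
    · calc B = homogeneousComponent (n' + 1) B := (hc_of_homog hB).symm
        _ = homogeneousComponent (n' + 1) (-(X 0 * D) + X 2 * F) := by
              rw [show -(X 0 * D) + X 2 * F = B by linear_combination -hF]
        _ = _ := by rw [map_add, map_neg, hcX, hcX]
    · calc Cc = homogeneousComponent (n' + 1) Cc := (hc_of_homog hC).symm
        _ = homogeneousComponent (n' + 1) (-(X 0 * E) - X 1 * F) := by rw [← hCF]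
        _ = _ := by rw [map_sub, map_neg, hcX, hcX]

/-- splitting a homogeneous polynomial with zero constant coefficient -/
lemma L1 {d : ℕ} {q : MvPolynomial (Fin 3) k} (hq : q.IsHomogeneous d)
    (hcc : constantCoeff q = 0) :
    ∃ A B Cc : MvPolynomial (Fin 3) k, q = X 0 * A + X 1 * B + X 2 * Cc ∧
      (A = 0 ∨ (1 ≤ d ∧ A.IsHomogeneous (d - 1))) ∧
      (B = 0 ∨ (1 ≤ d ∧ B.IsHomogeneous (d - 1))) ∧
      (Cc = 0 ∨ (1 ≤ d ∧ Cc.IsHomogeneous (d - 1))) := by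
  rcases Nat.eq_zero_or_pos d with rfl | hd
  · have : q = 0 := by rw [homog_zero_eq_C hq, ← constantCoeff_eq, hcc, map_zero]
    exact ⟨0, 0, 0, by simp [this], Or.inl rfl, Or.inl rfl, Or.inl rfl⟩
  · obtain ⟨A, B, Cc, hABC⟩ := split3 q hcc
    obtain ⟨n', rfl⟩ : ∃ n', d = n' + 1 := ⟨d - 1, by omega⟩
    refine ⟨homogeneousComponent n' A, homogeneousComponent n' B, homogeneousComponent n' Cc,
      ?_,
      Or.inr ⟨hd, by simpa using homogeneousComponent_isHomogeneous n' A⟩,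
      Or.inr ⟨hd, by simpa using homogeneousComponent_isHomogeneous n' B⟩,
      Or.inr ⟨hd, by simpa using homogeneousComponent_isHomogeneous n' Cc⟩⟩
    calc q = homogeneousComponent (n' + 1) q := (hc_of_homog hq).symm
      _ = homogeneousComponent (n' + 1) (X 0 * A + X 1 * B + X 2 * Cc) := by rw [← hABC]
      _ = _ := by rw [map_add, map_add, hcX, hcX, hcX]



variable {k : Type} [Field k]

/-- `x` lies in the degree-`n` piece of `⊕ₐ T(-D a)`. -/
def MemG {b : ℕ} (D : Fin b → ℕ) (n : ℕ) (x : Fin b → MvPolynomial (Fin 3) k) : Prop :=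
  ∀ a, x a = 0 ∨ ∃ e, e + D a = n ∧ (x a).IsHomogeneous e

lemma pi_decomp {b : ℕ} (x : Fin b → MvPolynomial (Fin 3) k) :
    x = ∑ j, x j • (Pi.single j 1 : Fin b → MvPolynomial (Fin 3) k) := by
  conv_lhs => rw [← Finset.univ_sum_single x]
  refine Finset.sum_congr rfl fun j _ => ?_
  ext a
  simp [Pi.single_apply]

lemma map_apply_eq_sum {b c : ℕ}
    (L : (Fin b → MvPolynomial (Fin 3) k) →ₗ[MvPolynomial (Fin 3) k]
      (Fin c → MvPolynomial (Fin 3) k)) (x : Fin b → MvPolynomial (Fin 3) k) (i : Fin c) :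
    L x i = ∑ j, x j * L (Pi.single j 1) i := by
  conv_lhs => rw [pi_decomp x, map_sum]
  rw [Finset.sum_apply]
  refine Finset.sum_congr rfl fun j _ => ?_
  rw [map_smul]
  rfl

lemma eps_apply_eq_sum {b : ℕ}
    (L : (Fin b → MvPolynomial (Fin 3) k) →ₗ[MvPolynomial (Fin 3) k] MvPolynomial (Fin 3) k)
    (x : Fin b → MvPolynomial (Fin 3) k) :
    L x = ∑ j, x j * L (Pi.single j 1) := by
  conv_lhs => rw [pi_decomp x, map_sum]
  refine Finset.sum_congr rfl fun j _ => ?_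
  rw [map_smul]
  rfl

lemma MemG_map {b c : ℕ} {D : Fin b → ℕ} {E : Fin c → ℕ}
    {L : (Fin b → MvPolynomial (Fin 3) k) →ₗ[MvPolynomial (Fin 3) k]
      (Fin c → MvPolynomial (Fin 3) k)}
    (hcol : ∀ i j, L (Pi.single j 1) i = 0 ∨
      (E i ≤ D j ∧ (L (Pi.single j 1) i).IsHomogeneous (D j - E i)))
    {n : ℕ} {x : Fin b → MvPolynomial (Fin 3) k} (hx : MemG D n x) : MemG E n (L x) := by
  intro i
  rw [map_apply_eq_sum]
  by_cases h : E i ≤ n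
  · refine Or.inr ⟨n - E i, by omega, IsHomogeneous.sum _ _ _ fun j _ => ?_⟩
    rcases hx j with h0 | ⟨e, he, hh⟩
    · rw [h0, zero_mul]; exact isHomogeneous_zero _ _ _
    rcases hcol i j with h0 | ⟨hle, hcolh⟩
    · rw [h0, mul_zero]; exact isHomogeneous_zero _ _ _
    · have hm := hh.mul hcolh
      have harith : e + (D j - E i) = n - E i := by omega
      rwa [harith] at hm
  · refine Or.inl (Finset.sum_eq_zero fun j _ => ?_)
    rcases hx j with h0 | ⟨e, he, _⟩
    · rw [h0, zero_mul]
    rcases hcol i j with h0 | ⟨hle, _⟩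
    · rw [h0, mul_zero]
    · omega

lemma MemG_eps {b : ℕ} {D : Fin b → ℕ}
    {L : (Fin b → MvPolynomial (Fin 3) k) →ₗ[MvPolynomial (Fin 3) k] MvPolynomial (Fin 3) k}
    (hcol : ∀ j, (L (Pi.single j 1)).IsHomogeneous (D j))
    {n : ℕ} {x : Fin b → MvPolynomial (Fin 3) k} (hx : MemG D n x) :
    (L x).IsHomogeneous n := by
  rw [eps_apply_eq_sum]
  refine IsHomogeneous.sum _ _ _ fun j _ => ?_
  rcases hx j with h0 | ⟨e, he, hh⟩
  · rw [h0, zero_mul]; exact isHomogeneous_zero _ _ _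
  · have hm := hh.mul (hcol j); rwa [he] at hm


end BettiAux

section Resolution
variable {k : Type} [Field k] {J : Ideal (S3 k)}

/-- witness chain for the Koszul comparison chase -/
def P (res : GradedMinFreeRes k J) (z : Fin res.b1 → S3 k) (f : S3 k) : Prop :=
  ∃ z1 z2 z3 v1 v2 v3, z = (X 0 : S3 k) • z1 + (X 1 : S3 k) • z2 + (X 2 : S3 k) • z3 ∧
    res.d1 z1 = (X 1 : S3 k) • v1 + (X 2 : S3 k) • v2 ∧
    res.d1 z2 = -((X 0 : S3 k) • v1) + (X 2 : S3 k) • v3 ∧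
    res.d1 z3 = -((X 0 : S3 k) • v2) - (X 1 : S3 k) • v3 ∧
    res.ε v1 = X 2 * f ∧ res.ε v2 = -(X 1 * f) ∧ res.ε v3 = X 0 * f

lemma P_zero (res : GradedMinFreeRes k J) : P res 0 0 :=
  ⟨0, 0, 0, 0, 0, 0, by simp, by simp, by simp, by simp, by simp, by simp, by simp⟩

lemma P_add {res : GradedMinFreeRes k J} {z z' : Fin res.b1 → S3 k} {f f' : S3 k}
    (h : P res z f) (h' : P res z' f') : P res (z + z') (f + f') := by
  obtain ⟨z1, z2, z3, v1, v2, v3, e0, e1, e2, e3, e4, e5, e6⟩ := h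
  obtain ⟨z1', z2', z3', v1', v2', v3', g0, g1, g2, g3, g4, g5, g6⟩ := h'
  refine ⟨z1 + z1', z2 + z2', z3 + z3', v1 + v1', v2 + v2', v3 + v3',
    ?_, ?_, ?_, ?_, ?_, ?_, ?_⟩
  · rw [e0, g0]; module
  · rw [map_add, e1, g1]; module
  · rw [map_add, e2, g2]; module
  · rw [map_add, e3, g3]; module
  · rw [map_add, e4, g4]; ring
  · rw [map_add, e5, g5]; ring
  · rw [map_add, e6, g6]; ring

lemma P_smul {res : GradedMinFreeRes k J} (q : S3 k) {z : Fin res.b1 → S3 k} {f : S3 k}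
    (h : P res z f) : P res (q • z) (q * f) := by
  obtain ⟨z1, z2, z3, v1, v2, v3, e0, e1, e2, e3, e4, e5, e6⟩ := h
  refine ⟨q • z1, q • z2, q • z3, q • v1, q • v2, q • v3, ?_, ?_, ?_, ?_, ?_, ?_, ?_⟩
  · rw [e0]; module
  · rw [map_smul, e1]; module
  · rw [map_smul, e2]; module
  · rw [map_smul, e3]; module
  · rw [map_smul, e4]; simp only [smul_eq_mul]; ring
  · rw [map_smul, e5]; simp only [smul_eq_mul]; ring
  · rw [map_smul, e6]; simp only [smul_eq_mul]; ring

lemma P_sum {res : GradedMinFreeRes k J} {ι : Type} [DecidableEq ι] (s : Finset ι)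
    (z : ι → Fin res.b1 → S3 k) (f : ι → S3 k) (q : ι → S3 k)
    (h : ∀ j ∈ s, P res (z j) (f j)) :
    P res (∑ j ∈ s, q j • z j) (∑ j ∈ s, q j * f j) := by
  induction s using Finset.induction_on with
  | empty => simpa using P_zero res
  | @insert a s hni ih =>
      rw [Finset.sum_insert hni, Finset.sum_insert hni]
      exact P_add (P_smul _ (h _ (Finset.mem_insert_self _ _)))
        (ih fun j hj => h j (Finset.mem_insert_of_mem hj))

/-- The chase: a second-syzygy basis column produces an element of `(J : m)`. -/
lemma chase (res : GradedMinFreeRes k J) (j : Fin res.b2) :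
    ∃ f, P res (res.d2 (Pi.single j 1)) f ∧
      (f = 0 ∨ (3 ≤ res.deg2 j ∧ f.IsHomogeneous (res.deg2 j - 3))) := by
  set p := res.deg2 j with hpdef
  set z := res.d2 (Pi.single j 1) with hzdef
  have hz : BettiAux.MemG res.deg1 p z := fun i =>
    (res.hom2 i j).imp id fun h => ⟨p - res.deg1 i, by omega, h.2⟩
  have hcc : ∀ a, constantCoeff (z a) = 0 := fun a => res.min2 _ a
  have step1 : ∀ a, ∃ A B Cc : S3 k,
      z a = X 0 * A + X 1 * B + X 2 * Cc ∧
      (A = 0 ∨ ∃ e, e + res.deg1 a = p - 1 ∧ A.IsHomogeneous e) ∧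
      (B = 0 ∨ ∃ e, e + res.deg1 a = p - 1 ∧ B.IsHomogeneous e) ∧
      (Cc = 0 ∨ ∃ e, e + res.deg1 a = p - 1 ∧ Cc.IsHomogeneous e) := by
    intro a
    rcases hz a with h0 | ⟨e, he, hh⟩
    · exact ⟨0, 0, 0, by simp [h0], Or.inl rfl, Or.inl rfl, Or.inl rfl⟩
    · obtain ⟨A, B, Cc, heq, hA, hB, hC⟩ := BettiAux.L1 hh (hcc a)
      exact ⟨A, B, Cc, heq,
        hA.imp id fun ⟨h1, h2⟩ => ⟨e - 1, by omega, h2⟩,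
        hB.imp id fun ⟨h1, h2⟩ => ⟨e - 1, by omega, h2⟩,
        hC.imp id fun ⟨h1, h2⟩ => ⟨e - 1, by omega, h2⟩⟩
  choose z1 z2 z3 hw hA hB hC using step1
  have hzeq : z = (X 0 : S3 k) • z1 + (X 1 : S3 k) • z2 + (X 2 : S3 k) • z3 := funext fun a => by
    simp only [Pi.add_apply, Pi.smul_apply, smul_eq_mul]; exact hw a
  have hz1 : BettiAux.MemG res.deg1 (p - 1) z1 := hA
  have hz2 : BettiAux.MemG res.deg1 (p - 1) z2 := hB
  have hz3 : BettiAux.MemG res.deg1 (p - 1) z3 := hC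
  have hdz : res.d1 z = 0 := by
    have h1 : z ∈ LinearMap.range res.d2 := ⟨Pi.single j 1, rfl⟩
    rw [← res.exact2] at h1
    exact h1
  have hsum0 : (X 0 : S3 k) • res.d1 z1 + (X 1 : S3 k) • res.d1 z2 + (X 2 : S3 k) • res.d1 z3 = 0 := by
    rw [← map_smul, ← map_smul, ← map_smul, ← map_add, ← map_add, ← hzeq, hdz]
  have keq : ∀ i, X 0 * res.d1 z1 i + X 1 * res.d1 z2 i + X 2 * res.d1 z3 i = 0 := by
    intro i
    have h2 := congrFun hsum0 i
    simpa using h2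
  have hm1 : BettiAux.MemG res.deg0 (p - 1) (res.d1 z1) := BettiAux.MemG_map res.hom1 hz1
  have hm2 : BettiAux.MemG res.deg0 (p - 1) (res.d1 z2) := BettiAux.MemG_map res.hom1 hz2
  have hm3 : BettiAux.MemG res.deg0 (p - 1) (res.d1 z3) := BettiAux.MemG_map res.hom1 hz3
  have step2 : ∀ i, ∃ v1 v2 v3 : S3 k,
      res.d1 z1 i = X 1 * v1 + X 2 * v2 ∧
      res.d1 z2 i = -(X 0 * v1) + X 2 * v3 ∧
      res.d1 z3 i = -(X 0 * v2) - X 1 * v3 ∧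
      (v1 = 0 ∨ ∃ e, e + res.deg0 i = p - 2 ∧ v1.IsHomogeneous e) ∧
      (v2 = 0 ∨ ∃ e, e + res.deg0 i = p - 2 ∧ v2.IsHomogeneous e) ∧
      (v3 = 0 ∨ ∃ e, e + res.deg0 i = p - 2 ∧ v3.IsHomogeneous e) := by
    intro i
    have hgen : ∀ y : Fin res.b0 → S3 k, BettiAux.MemG res.deg0 (p - 1) y →
        (y i).IsHomogeneous (p - 1 - res.deg0 i) := by
      intro y hy
      rcases hy i with h0 | ⟨e, he, hh⟩
      · rw [h0]; exact isHomogeneous_zero _ _ _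
      · have he' : e = p - 1 - res.deg0 i := by omega
        rwa [← he']
    obtain ⟨v1, v2, v3, e1, e2, e3, hv1, hv2, hv3⟩ :=
      BettiAux.E1 (hgen _ hm1) (hgen _ hm2) (hgen _ hm3) (keq i)
    exact ⟨v1, v2, v3, e1, e2, e3,
      hv1.imp id fun ⟨h1, h2⟩ => ⟨p - 1 - res.deg0 i - 1, by omega, h2⟩,
      hv2.imp id fun ⟨h1, h2⟩ => ⟨p - 1 - res.deg0 i - 1, by omega, h2⟩,
      hv3.imp id fun ⟨h1, h2⟩ => ⟨p - 1 - res.deg0 i - 1, by omega, h2⟩⟩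
  choose v1 v2 v3 ev1 ev2 ev3 hV1 hV2 hV3 using step2
  have hd11 : res.d1 z1 = (X 1 : S3 k) • v1 + (X 2 : S3 k) • v2 := funext fun i => by
    simp only [Pi.add_apply, Pi.smul_apply, smul_eq_mul]; exact ev1 i
  have hd12 : res.d1 z2 = -((X 0 : S3 k) • v1) + (X 2 : S3 k) • v3 := funext fun i => by
    simp only [Pi.add_apply, Pi.neg_apply, Pi.smul_apply, smul_eq_mul]; exact ev2 i
  have hd13 : res.d1 z3 = -((X 0 : S3 k) • v2) - (X 1 : S3 k) • v3 := funext fun i => by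
    simp only [Pi.sub_apply, Pi.neg_apply, Pi.smul_apply, smul_eq_mul]; exact ev3 i
  have hεd1 : ∀ y : Fin res.b1 → S3 k, res.ε (res.d1 y) = 0 := by
    intro y
    have h1 : res.d1 y ∈ LinearMap.range res.d1 := ⟨y, rfl⟩
    rw [← res.exact1] at h1
    exact h1
  have he1 : (res.ε v1).IsHomogeneous (p - 2) := BettiAux.MemG_eps res.hom0 hV1
  have he2 : (res.ε v2).IsHomogeneous (p - 2) := BettiAux.MemG_eps res.hom0 hV2
  have he3 : (res.ε v3).IsHomogeneous (p - 2) := BettiAux.MemG_eps res.hom0 hV3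
  have q1 : X 1 * res.ε v1 + X 2 * res.ε v2 = 0 := by
    have h0 := hεd1 z1
    rw [hd11, map_add, map_smul, map_smul] at h0
    simpa using h0
  have q2 : -(X 0 * res.ε v1) + X 2 * res.ε v3 = 0 := by
    have h0 := hεd1 z2
    rw [hd12, map_add, map_neg, map_smul, map_smul] at h0
    simpa using h0
  have he3' := he3
  obtain ⟨f, hf1, hf2, hf3, hfh⟩ := BettiAux.E2 he1 he2 he3 q1 q2
  refine ⟨f, ⟨z1, z2, z3, v1, v2, v3, hzeq, hd11, hd12, hd13, hf1, hf2, hf3⟩, ?_⟩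
  refine hfh.imp id fun ⟨h1, h2⟩ => ⟨by omega, ?_⟩
  have harith : p - 2 - 1 = p - 3 := by omega
  rwa [harith] at h2

lemma keyclaim (res : GradedMinFreeRes k J) {z : Fin res.b1 → S3 k} {f : S3 k}
    (hP : P res z f) (hf : f ∈ LinearMap.range res.ε) :
    ∃ ζ1 ζ2 ζ3, ζ1 ∈ LinearMap.range res.d2 ∧ ζ2 ∈ LinearMap.range res.d2 ∧
      ζ3 ∈ LinearMap.range res.d2 ∧ z = (X 0 : S3 k) • ζ1 + (X 1 : S3 k) • ζ2 + (X 2 : S3 k) • ζ3 := by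
  obtain ⟨z1, z2, z3, v1, v2, v3, e0, e1, e2, e3, e4, e5, e6⟩ := hP
  obtain ⟨g, hg⟩ := hf
  have mk1 : ∀ y : Fin res.b0 → S3 k, res.ε y = 0 → y ∈ LinearMap.range res.d1 := by
    intro y hy
    rw [← res.exact1]
    exact LinearMap.mem_ker.mpr hy
  obtain ⟨w1, hw1⟩ := mk1 (v1 - (X 2 : S3 k) • g)
    (by rw [map_sub, map_smul, e4, hg]; simp [smul_eq_mul])
  obtain ⟨w2, hw2⟩ := mk1 (v2 + (X 1 : S3 k) • g)
    (by rw [map_add, map_smul, e5, hg]; simp [smul_eq_mul])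
  obtain ⟨w3, hw3⟩ := mk1 (v3 - (X 0 : S3 k) • g)
    (by rw [map_sub, map_smul, e6, hg]; simp [smul_eq_mul])
  have mk2 : ∀ y : Fin res.b1 → S3 k, res.d1 y = 0 → y ∈ LinearMap.range res.d2 := by
    intro y hy
    rw [← res.exact2]
    exact LinearMap.mem_ker.mpr hy
  refine ⟨z1 - ((X 1 : S3 k) • w1 + (X 2 : S3 k) • w2), z2 + ((X 0 : S3 k) • w1 - (X 2 : S3 k) • w3), z3 + ((X 0 : S3 k) • w2 + (X 1 : S3 k) • w3),
    mk2 _ ?_, mk2 _ ?_, mk2 _ ?_, ?_⟩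
  · rw [map_sub, map_add, map_smul, map_smul, e1, hw1, hw2]; module
  · rw [map_add, map_sub, map_smul, map_smul, e2, hw1, hw3]; module
  · rw [map_add, map_add, map_smul, map_smul, e3, hw2, hw3]; module
  · rw [e0]; module

lemma extract (res : GradedMinFreeRes k J) (B : Finset (Fin res.b2)) (c : Fin res.b2 → k)
    (fns : Fin res.b2 → S3 k)
    (hP : ∀ j ∈ B, P res (res.d2 (Pi.single j 1)) (fns j))
    (hmem : (∑ j ∈ B, C (c j) * fns j) ∈ LinearMap.range res.ε) :
    ∀ j ∈ B, c j = 0 := by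
  have hPsum : P res (∑ j ∈ B, (C (c j) : S3 k) • res.d2 (Pi.single j 1))
      (∑ j ∈ B, C (c j) * fns j) := P_sum B _ fns _ hP
  set x0 : Fin res.b2 → S3 k :=
    ∑ j ∈ B, (C (c j) : S3 k) • (Pi.single j 1 : Fin res.b2 → S3 k) with hx0
  have hzx : res.d2 x0 = ∑ j ∈ B, (C (c j) : S3 k) • res.d2 (Pi.single j 1) := by
    rw [hx0, map_sum]
    exact Finset.sum_congr rfl fun j _ => by rw [map_smul]
  rw [← hzx] at hPsum
  obtain ⟨ζ1, ζ2, ζ3, m1, m2, m3, heq⟩ := keyclaim res hPsum hmem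
  obtain ⟨w1, rfl⟩ := m1
  obtain ⟨w2, rfl⟩ := m2
  obtain ⟨w3, rfl⟩ := m3
  have hker : res.d2 (x0 - ((X 0 : S3 k) • w1 + (X 1 : S3 k) • w2 + (X 2 : S3 k) • w3)) = 0 := by
    rw [map_sub, heq, map_add, map_add, map_smul, map_smul, map_smul, sub_self]
  have hx00 : x0 = (X 0 : S3 k) • w1 + (X 1 : S3 k) • w2 + (X 2 : S3 k) • w3 := by
    have hmemker : x0 - ((X 0 : S3 k) • w1 + (X 1 : S3 k) • w2 + (X 2 : S3 k) • w3) ∈ LinearMap.ker res.d2 :=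
      LinearMap.mem_ker.mpr hker
    rw [res.inj2, Submodule.mem_bot, sub_eq_zero] at hmemker
    exact hmemker
  intro j hj
  have happ : x0 j = C (c j) := by
    rw [hx0, Finset.sum_apply]
    simp only [Pi.smul_apply, smul_eq_mul, Pi.single_apply, mul_ite, mul_one, mul_zero]
    rw [Finset.sum_ite_eq B j fun j' => (C (c j') : S3 k)]
    exact if_pos hj
  have hcc0 : constantCoeff (x0 j) = 0 := by
    rw [hx00]
    simp [constantCoeff_X]
  rw [happ] at hcc0
  simpa using hcc0

end Resolution

section Finale
variable {k : Type} [Field k]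

instance homSubFD (n : ℕ) : FiniteDimensional k ↥(homogeneousSubmodule (Fin 3) k n) := by
  have hle : homogeneousSubmodule (Fin 3) k n ≤ restrictTotalDegree (Fin 3) k n := by
    intro q hq
    rw [mem_restrictTotalDegree]
    exact IsHomogeneous.totalDegree_le ((mem_homogeneousSubmodule _ _).1 hq)
  exact Submodule.finiteDimensional_of_le hle

end Finale

theorem main_aux {k : Type} [Field k] (J : Ideal (S3 k))
    (res : GradedMinFreeRes k J) (p : ℕ) :
    (Finset.univ.filter fun i => res.deg2 i = p).card +
      hilbertFunction k J (p - 3) ≤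
    hilbertFunction k J (p - 2) := by
  classical
  set B := (Finset.univ.filter fun i => res.deg2 i = p) with hBdef
  have hBp : ∀ j ∈ B, res.deg2 j = p := fun j hj => (Finset.mem_filter.1 hj).2
  choose fns hPf hdeg using fun j => chase res j
  rcases le_or_gt p 2 with hp | hp
  · -- small degrees: no second syzygies at all
    have hBempty : B = ∅ := by
      rw [Finset.eq_empty_iff_forall_notMem]
      intro j hj
      have hfj : fns j = 0 := by
        rcases hdeg j with h | ⟨h3, _⟩
        · exact h
        · exact absurd h3 (by rw [hBp j hj]; omega)
      have hext := extract res {j} (fun _ => 1) fns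
        (fun j' hj' => by rw [Finset.mem_singleton] at hj'; rw [hj']; exact hPf j)
        (by rw [Finset.sum_singleton, hfj, mul_zero]; exact zero_mem _)
      exact one_ne_zero (hext j (Finset.mem_singleton_self j))
    rw [hBempty, Finset.card_empty, zero_add, show p - 3 = p - 2 by omega]
  · -- main case p ≥ 3
    set M3 := (J.restrictScalars k ⊓ homogeneousSubmodule (Fin 3) k (p - 3)) with hM3
    set M2 := (J.restrictScalars k ⊓ homogeneousSubmodule (Fin 3) k (p - 2)) with hM2
    haveI h2fd : FiniteDimensional k ↥M2 := Submodule.finiteDimensional_of_le inf_le_right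
    haveI h3fd : FiniteDimensional k ↥M3 := Submodule.finiteDimensional_of_le inf_le_right
    have hXf_memJ : ∀ j, (X 0 : S3 k) * fns j ∈ J := by
      intro j
      obtain ⟨z1, z2, z3, v1, v2, v3, _, _, _, _, _, _, h6⟩ := hPf j
      rw [← res.range_eps]
      exact ⟨v3, h6⟩
    have hXf_hom : ∀ j ∈ B, ((X 0 : S3 k) * fns j).IsHomogeneous (p - 2) := by
      intro j hj
      rcases hdeg j with h | ⟨h3, hh⟩
      · rw [h, mul_zero]; exact isHomogeneous_zero _ _ _
      · have h' : ((X 0 : S3 k) * fns j).IsHomogeneous (1 + (res.deg2 j - 3)) :=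
          (isHomogeneous_X _ _).mul hh
        rwa [hBp j hj, show 1 + (p - 3) = p - 2 by omega] at h'
    have hg_mem : ∀ g : ↥M3, (g : S3 k) ∈ J ∧ ((g : S3 k)).IsHomogeneous (p - 3) := by
      intro g
      obtain ⟨h1, h2⟩ := Submodule.mem_inf.mp g.2
      exact ⟨(Submodule.restrictScalars_mem k J _).mp h1, (mem_homogeneousSubmodule _ _).1 h2⟩
    have hΦmem : ∀ cg : (↥B → k) × ↥M3,
        (∑ j ∈ B.attach, C (cg.1 j) * (X 0 * fns j.1)) + X 0 * (cg.2 : S3 k) ∈ M2 := by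
      intro cg
      rw [hM2]
      refine Submodule.mem_inf.mpr ⟨?_, ?_⟩
      · rw [Submodule.restrictScalars_mem]
        refine add_mem (Submodule.sum_mem _ fun j _ => ?_) ?_
        · exact Ideal.mul_mem_left _ _ (hXf_memJ j.1)
        · exact Ideal.mul_mem_left _ _ (hg_mem cg.2).1
      · refine add_mem (Submodule.sum_mem _ fun j _ => ?_) ?_
        · rw [mem_homogeneousSubmodule]
          have hc : ((C (cg.1 j) : S3 k) * (X 0 * fns j.1)).IsHomogeneous (0 + (p - 2)) :=
            (isHomogeneous_C _ _).mul (hXf_hom j.1 j.2)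
          rwa [zero_add] at hc
        · rw [mem_homogeneousSubmodule]
          have hc : ((X 0 : S3 k) * (cg.2 : S3 k)).IsHomogeneous (1 + (p - 3)) :=
            (isHomogeneous_X _ _).mul (hg_mem cg.2).2
          rwa [show 1 + (p - 3) = p - 2 by omega] at hc
    set Φ : ((↥B → k) × ↥M3) →ₗ[k] ↥M2 :=
      { toFun := fun cg => ⟨_, hΦmem cg⟩
        map_add' := by
          intro x y
          apply Subtype.ext
          simp only [Prod.fst_add, Prod.snd_add, Pi.add_apply, map_add, add_mul,
            Submodule.coe_add, mul_add, Finset.sum_add_distrib]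
          ring
        map_smul' := by
          intro a x
          apply Subtype.ext
          simp only [Prod.smul_fst, Prod.smul_snd, Pi.smul_apply, smul_eq_mul,
            Submodule.coe_smul, smul_eq_C_mul, map_mul, Finset.mul_sum, SetLike.val_smul,
            RingHom.id_apply, mul_add, mul_assoc]
          ring_nf
          congr 1
          exact Finset.sum_congr rfl fun _ _ => by ring } with hΦ
    have hinj : Function.Injective Φ := by
      rw [← LinearMap.ker_eq_bot, Submodule.eq_bot_iff]
      rintro ⟨c, g⟩ hker
      have hval : (∑ j ∈ B.attach, C (c j) * (X 0 * fns j.1)) + X 0 * (g : S3 k) = 0 := by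
        have := congrArg (Subtype.val) hker
        simpa [hΦ] using this
      have hfactor : (X 0 : S3 k) * ((∑ j ∈ B.attach, C (c j) * fns j.1) + (g : S3 k)) = 0 := by
        rw [mul_add, Finset.mul_sum]
        rw [Finset.sum_congr rfl fun j _ =>
          show (X 0 : S3 k) * (C (c j) * fns j.1) = C (c j) * (X 0 * fns j.1) by ring]
        exact hval
      have hinner : (∑ j ∈ B.attach, C (c j) * fns j.1) + (g : S3 k) = 0 :=
        BettiAux.X_mul_eq_zero (i := 0) hfactor
      set c' : Fin res.b2 → k := fun j => if h : j ∈ B then c ⟨j, h⟩ else 0 with hc'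
      have hsum_eq : (∑ j ∈ B, C (c' j) * fns j) = ∑ j ∈ B.attach, C (c j) * fns j.1 := by
        rw [← Finset.sum_attach B (fun j => C (c' j) * fns j)]
        refine Finset.sum_congr rfl fun j _ => ?_
        show C (if h : (j : Fin res.b2) ∈ B then c ⟨j, h⟩ else 0) * fns j = _
        rw [dif_pos j.2]
      have hmem : (∑ j ∈ B, C (c' j) * fns j) ∈ LinearMap.range res.ε := by
        rw [res.range_eps, hsum_eq, show (∑ j ∈ B.attach, C (c j) * fns j.1) = -(g : S3 k) by
          linear_combination hinner]
        exact neg_mem (hg_mem g).1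
      have hczero := extract res B c' fns (fun j hj => hPf j) hmem
      have hc0 : c = 0 := by
        funext j
        have h0 := hczero j.1 j.2
        have h1 : c' j.1 = c j := by
          show (if h : (j : Fin res.b2) ∈ B then c ⟨_, h⟩ else 0) = c j
          rw [dif_pos j.2]
        rw [h1] at h0
        exact h0
      have hg0 : (g : S3 k) = 0 := by
        have hs0 : (∑ j ∈ B.attach, C (c j) * fns j.1) = 0 :=
          Finset.sum_eq_zero fun j _ => by rw [hc0]; simp
        rw [hs0, zero_add] at hinner
        exact hinner
      exact Prod.ext (by simpa using hc0) (by simpa using Subtype.ext hg0)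
    have hfr := LinearMap.finrank_le_finrank_of_injective hinj
    have hcount : Module.finrank k ((↥B → k) × ↥M3) = B.card + Module.finrank k ↥M3 := by
      rw [Module.finrank_prod, Module.finrank_pi, Fintype.card_coe]
    rw [hilbertFunction, hilbertFunction]
    calc B.card + Module.finrank k ↥M3 = Module.finrank k ((↥B → k) × ↥M3) := hcount.symm
      _ ≤ Module.finrank k ↥M2 := hfr



/-- Let `J = (f₁,…,f_m) ⊆ T = k[s,t,u]` be a homogeneous ideal.
Then for every `p` the graded Betti number `β_{2,p}(J) = dim_k Tor₂^T(J,k)_p`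
satisfies `β_{2,p}(J) ≤ H_J(p−2) − H_J(p−3)`, i.e.
`β_{2,p}(J) + H_J(p−3) ≤ H_J(p−2)`. -/
theorem graded_betti_two_le
    (k : Type) [Field k] (m : ℕ)
    (f : Fin m → S3 k) (δ : Fin m → ℕ)
    (hhom : ∀ i, (f i).IsHomogeneous (δ i))
    (res : GradedMinFreeRes k (Ideal.span (Set.range f)))
    (p : ℕ) :
    (Finset.univ.filter fun i => res.deg2 i = p).card +
      hilbertFunction k (Ideal.span (Set.range f)) (p - 3) ≤
    hilbertFunction k (Ideal.span (Set.range f)) (p - 2) :=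
  main_aux _ res p
end
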